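/- Let Q = ∏_{j=1}^∞ [0,1] and fix k, n ∈ ℕ. Define G : F_n(Q) × [0,1] → F_n(Q) by letting G(A,t) replace each element (x₁,x₂,…) of A by (x₁,…,x_k, (1−t)x_{k+1}, (1−t)x_{k+2}, …). Then G is continuous, G(A,0) = A for all A, the diameter of G({A} × [0,1]) is at most 2^{-k} for each A (in a suitable product metric), and G(F_n(Q) × {1}) is homeomorphic to F_n([0,1]^k). -/

import Mathlib

open Metric TopologicalSpace Set Filter unitInterval

lemma sumgeo : Summable (fun j : ℕ => (2:ℝ)⁻¹ ^ (j + 1)) := by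
  simpa [pow_succ] using (summable_geometric_of_lt_one (by norm_num : (0:ℝ) ≤ 2⁻¹)
    (by norm_num)).mul_right 2⁻¹

lemma tsumgeo : ∑' j : ℕ, (2:ℝ)⁻¹ ^ (j + 1) = 1 := by
  have h := tsum_geometric_two' 1
  rw [← h]
  apply tsum_congr; intro j
  rw [pow_succ]
  field_simp
  rw [← mul_pow]; norm_num

lemma summable_aux (c : ℕ → ℝ) (h0 : ∀ j, 0 ≤ c j) (h1 : ∀ j, c j ≤ 1) :
    Summable (fun j : ℕ => (2:ℝ)⁻¹ ^ (j + 1) * c j) := by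
  refine Summable.of_nonneg_of_le (fun j => mul_nonneg (by positivity) (h0 j)) (fun j => ?_) sumgeo
  calc (2:ℝ)⁻¹ ^ (j+1) * c j ≤ (2:ℝ)⁻¹ ^ (j+1) * 1 := by
        exact mul_le_mul_of_nonneg_left (h1 j) (by positivity)
    _ = (2:ℝ)⁻¹ ^ (j+1) := mul_one _

lemma tsum_tail (k : ℕ) : ∑' j : ℕ, (if j < k then (0:ℝ) else (2:ℝ)⁻¹ ^ (j + 1)) = (2:ℝ)⁻¹ ^ k := by
  have hs : Summable (fun j : ℕ => (if j < k then (0:ℝ) else (2:ℝ)⁻¹ ^ (j + 1))) := by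
    refine Summable.of_nonneg_of_le (fun j => ?_) (fun j => ?_) sumgeo
    · split <;> positivity
    · split
      · positivity
      · exact le_rfl
  rw [← hs.sum_add_tsum_nat_add k]
  have h1 : ∀ i ∈ Finset.range k, (if i < k then (0:ℝ) else (2:ℝ)⁻¹ ^ (i + 1)) = 0 := by
    intro i hi; simp [Finset.mem_range.1 hi]
  rw [Finset.sum_congr rfl h1]
  simp only [Finset.sum_const_zero, zero_add]
  have : ∀ i : ℕ, (if i + k < k then (0:ℝ) else (2:ℝ)⁻¹ ^ (i + k + 1)) = (2:ℝ)⁻¹ ^ (i+1) * (2:ℝ)⁻¹ ^ k := by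
    intro i
    rw [if_neg (by omega)]
    ring
  rw [tsum_congr this, tsum_mul_right, tsumgeo, one_mul]

lemma summable_tail (k : ℕ) : Summable (fun j : ℕ => (if j < k then (0:ℝ) else (2:ℝ)⁻¹ ^ (j + 1))) := by
  refine Summable.of_nonneg_of_le (fun j => ?_) (fun j => ?_) sumgeo
  · split <;> positivity
  · split
    · positivity
    · exact le_rfl

lemma abs_I_sub_le (a b : I) : |(a:ℝ) - b| ≤ 1 := by
  rw [abs_sub_le_iff]
  constructor <;> nlinarith [a.2.1, a.2.2, b.2.1, b.2.2]

section
variable [m : MetricSpace (ℕ → I)]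
variable (hm : ∀ x y : ℕ → I, dist x y = ∑' j, (2:ℝ)⁻¹ ^ (j + 1) * |(x j : ℝ) - (y j : ℝ)|)

include hm

lemma summable_dist (x y : ℕ → I) :
    Summable (fun j : ℕ => (2:ℝ)⁻¹ ^ (j + 1) * |(x j : ℝ) - (y j : ℝ)|) :=
  summable_aux _ (fun j => abs_nonneg _) (fun j => abs_I_sub_le _ _)

lemma coord_le (x y : ℕ → I) (j : ℕ) :
    |(x j : ℝ) - y j| ≤ 2 ^ (j + 1) * dist x y := by
  have h : (2:ℝ)⁻¹ ^ (j + 1) * |(x j : ℝ) - y j| ≤ dist x y := by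
    rw [hm x y]
    exact Summable.le_tsum (summable_dist hm x y) j (fun i _ => mul_nonneg (by positivity) (abs_nonneg _))
  have h2 : (2:ℝ) ^ (j+1) * ((2:ℝ)⁻¹ ^ (j + 1) * |(x j : ℝ) - y j|) = |(x j : ℝ) - y j| := by
    rw [← mul_assoc, ← mul_pow]
    norm_num
  calc |(x j : ℝ) - y j| = (2:ℝ) ^ (j+1) * ((2:ℝ)⁻¹ ^ (j + 1) * |(x j : ℝ) - y j|) := h2.symm
    _ ≤ 2 ^ (j+1) * dist x y := by
        exact mul_le_mul_of_nonneg_left h (by positivity)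

lemma dist_g_le (k : ℕ) (t s : I) (x y : ℕ → I) :
    dist (fun j => if j < k then x j else σ t * x j)
         (fun j => if j < k then y j else σ s * y j)
      ≤ dist x y + (2:ℝ)⁻¹ ^ k * dist t s := by
  set X : ℕ → I := fun j => if j < k then x j else σ t * x j with hX
  set Y : ℕ → I := fun j => if j < k then y j else σ s * y j with hY
  have hb : Summable (fun j : ℕ => (2:ℝ)⁻¹ ^ (j + 1) * |(x j : ℝ) - (y j : ℝ)|) :=
    summable_dist hm x y
  have hc : Summable (fun j : ℕ => (if j < k then (0:ℝ) else (2:ℝ)⁻¹ ^ (j + 1)) * dist t s) :=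
    (summable_tail k).mul_right _
  have hdts : dist t s = |(t:ℝ) - s| := by rw [Subtype.dist_eq, Real.dist_eq]
  have hpt : ∀ j : ℕ, (2:ℝ)⁻¹ ^ (j + 1) * |(X j : ℝ) - (Y j : ℝ)| ≤
      (2:ℝ)⁻¹ ^ (j + 1) * |(x j : ℝ) - (y j : ℝ)|
        + (if j < k then (0:ℝ) else (2:ℝ)⁻¹ ^ (j + 1)) * dist t s := by
    intro j
    by_cases hj : j < k
    · simp only [hX, hY, if_pos hj]
      exact le_add_of_nonneg_right (by rw [hdts]; positivity)
    · simp only [hX, hY, if_neg hj]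
      have hcoe : ∀ (u : I) (z : I), ((σ u * z : I) : ℝ) = (1 - (u:ℝ)) * z := by
        intro u z
        rw [Set.Icc.coe_mul, coe_symm_eq]
      rw [hcoe, hcoe, hdts]
      have key : |(1 - (t:ℝ)) * x j - (1 - (s:ℝ)) * y j| ≤ |(x j : ℝ) - y j| + |(t:ℝ) - s| := by
        have e1 : (1 - (t:ℝ)) * x j - (1 - (s:ℝ)) * y j
            = (1 - (t:ℝ)) * ((x j : ℝ) - y j) + ((s:ℝ) - t) * y j := by ring
        rw [e1]
        calc |(1 - (t:ℝ)) * ((x j : ℝ) - y j) + ((s:ℝ) - t) * y j|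
            ≤ |(1 - (t:ℝ)) * ((x j : ℝ) - y j)| + |((s:ℝ) - t) * y j| := abs_add_le _ _
          _ = |1 - (t:ℝ)| * |(x j : ℝ) - y j| + |(s:ℝ) - t| * |(y j : ℝ)| := by
              rw [abs_mul, abs_mul]
          _ ≤ 1 * |(x j : ℝ) - y j| + |(s:ℝ) - t| * 1 := by
              gcongr
              · rw [abs_of_nonneg (by nlinarith [t.2.2])]; nlinarith [t.2.1]
              · rw [abs_of_nonneg (y j).2.1]; exact (y j).2.2
          _ = |(x j : ℝ) - y j| + |(t:ℝ) - s| := by rw [one_mul, mul_one, abs_sub_comm (s:ℝ)]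
      nlinarith [pow_nonneg (by norm_num : (0:ℝ) ≤ 2⁻¹) (j+1), key, abs_nonneg ((x j : ℝ) - y j), abs_nonneg ((t:ℝ) - s)]
  have hXY : Summable (fun j : ℕ => (2:ℝ)⁻¹ ^ (j + 1) * |(X j : ℝ) - (Y j : ℝ)|) :=
    summable_dist hm X Y
  rw [hm X Y, hm x y]
  calc ∑' j, (2:ℝ)⁻¹ ^ (j + 1) * |(X j : ℝ) - (Y j : ℝ)|
      ≤ ∑' j, ((2:ℝ)⁻¹ ^ (j + 1) * |(x j : ℝ) - (y j : ℝ)|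
          + (if j < k then (0:ℝ) else (2:ℝ)⁻¹ ^ (j + 1)) * dist t s) :=
        Summable.tsum_le_tsum hpt hXY (hb.add hc)
    _ = (∑' j, (2:ℝ)⁻¹ ^ (j + 1) * |(x j : ℝ) - (y j : ℝ)|)
          + (∑' j, (if j < k then (0:ℝ) else (2:ℝ)⁻¹ ^ (j + 1))) * dist t s := by
        rw [Summable.tsum_add hb hc, tsum_mul_right]
    _ = (∑' j, (2:ℝ)⁻¹ ^ (j + 1) * |(x j : ℝ) - (y j : ℝ)|) + (2:ℝ)⁻¹ ^ k * dist t s := by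
        rw [tsum_tail]

end

lemma hausdorff_aux {X Y : Type*} [MetricSpace X] [MetricSpace Y]
    {f g : X → Y} {s t : Set X} (hs : IsCompact s) (ht : IsCompact t)
    (hsne : s.Nonempty) (htne : t.Nonempty) {C r : ℝ} (hC : 0 ≤ C) (hr : 0 ≤ r)
    (hfg : ∀ x y, dist (f x) (g y) ≤ C * dist x y + r) :
    hausdorffDist (f '' s) (g '' t) ≤ C * hausdorffDist s t + r := by
  have fin : EMetric.hausdorffEdist s t ≠ ⊤ :=
    hausdorffEdist_ne_top_of_nonempty_of_bounded hsne htne hs.isBounded ht.isBounded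
  refine hausdorffDist_le_of_mem_dist
    (add_nonneg (mul_nonneg hC hausdorffDist_nonneg) hr) ?_ ?_
  · rintro u ⟨x, hx, rfl⟩
    obtain ⟨y, hyt, hxy⟩ := ht.exists_infDist_eq_dist htne x
    refine ⟨g y, mem_image_of_mem g hyt, ?_⟩
    have h1 : infDist x t ≤ hausdorffDist s t := infDist_le_hausdorffDist_of_mem hx fin
    calc dist (f x) (g y) ≤ C * dist x y + r := hfg x y
      _ = C * infDist x t + r := by rw [hxy]
      _ ≤ C * hausdorffDist s t + r :=
        add_le_add_left (mul_le_mul_of_nonneg_left h1 hC) r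
  · rintro u ⟨y, hy, rfl⟩
    obtain ⟨x, hxs, hxy⟩ := hs.exists_infDist_eq_dist hsne y
    refine ⟨f x, mem_image_of_mem f hxs, ?_⟩
    have h1 : infDist y s ≤ hausdorffDist t s :=
      infDist_le_hausdorffDist_of_mem hy (by rw [hausdorffEDist_comm]; exact fin)
    calc dist (g y) (f x) = dist (f x) (g y) := dist_comm _ _
      _ ≤ C * dist x y + r := hfg x y
      _ = C * infDist y s + r := by rw [dist_comm, hxy]
      _ ≤ C * hausdorffDist t s + r :=
        add_le_add_left (mul_le_mul_of_nonneg_left h1 hC) r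
      _ = C * hausdorffDist s t + r := by rw [hausdorffDist_comm]

noncomputable def emb (k : ℕ) : (Fin k → I) → (ℕ → I) := fun x j => if h : j < k then x ⟨j, h⟩ else 0

def proj (k : ℕ) : (ℕ → I) → (Fin k → I) := fun x i => x i

section
variable [m : MetricSpace (ℕ → I)]
variable (hm : ∀ x y : ℕ → I, dist x y = ∑' j, (2:ℝ)⁻¹ ^ (j + 1) * |(x j : ℝ) - (y j : ℝ)|)
include hm

lemma dist_emb_le (k : ℕ) (x y : Fin k → I) : dist (emb k x) (emb k y) ≤ dist x y := by
  rw [hm]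
  have hpt : ∀ j : ℕ, (2:ℝ)⁻¹ ^ (j + 1) * |(emb k x j : ℝ) - (emb k y j : ℝ)|
      ≤ (2:ℝ)⁻¹ ^ (j + 1) * dist x y := by
    intro j
    refine mul_le_mul_of_nonneg_left ?_ (by positivity)
    by_cases hj : j < k
    · simp only [emb, dif_pos hj]
      have h1 : dist (x ⟨j, hj⟩) (y ⟨j, hj⟩) ≤ dist x y := dist_le_pi_dist x y _
      rwa [Subtype.dist_eq, Real.dist_eq] at h1
    · simp only [emb, dif_neg hj, sub_self, abs_zero]
      exact dist_nonneg
  calc ∑' j, (2:ℝ)⁻¹ ^ (j + 1) * |(emb k x j : ℝ) - (emb k y j : ℝ)|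
      ≤ ∑' j, (2:ℝ)⁻¹ ^ (j + 1) * dist x y :=
        Summable.tsum_le_tsum hpt (summable_dist hm _ _) (sumgeo.mul_right _)
    _ = 1 * dist x y := by rw [tsum_mul_right, tsumgeo]
    _ = dist x y := one_mul _

lemma dist_proj_le (k : ℕ) (x y : ℕ → I) : dist (proj k x) (proj k y) ≤ 2 ^ k * dist x y := by
  refine (dist_pi_le_iff (by positivity)).2 fun i => ?_
  rw [Subtype.dist_eq, Real.dist_eq]
  calc |(x i : ℝ) - y i| ≤ 2 ^ ((i : ℕ) + 1) * dist x y := coord_le hm x y i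
    _ ≤ 2 ^ k * dist x y := by
        refine mul_le_mul_of_nonneg_right ?_ dist_nonneg
        exact pow_le_pow_right₀ (by norm_num) i.2

lemma lip_emb (k : ℕ) : LipschitzWith 1 (emb k) :=
  LipschitzWith.of_dist_le_mul (K := 1) fun x y => by
    simpa using dist_emb_le hm k x y

lemma lip_proj (k : ℕ) : LipschitzWith (2 ^ k) (proj k) :=
  LipschitzWith.of_dist_le_mul (K := 2 ^ k) fun x y => by
    have := dist_proj_le hm k x y
    push_cast
    convert this using 2

end

section NChelpers
variable {X : Type*} [MetricSpace X]

def NC_coe (A : NonemptyCompacts X) : Set X := A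

@[simp] lemma NC_coe_eq (A : NonemptyCompacts X) : NC_coe A = (A : Set X) := rfl

lemma NC_compact (A : NonemptyCompacts X) : IsCompact (A : Set X) := A.isCompact

lemma NC_nonempty (A : NonemptyCompacts X) : (A : Set X).Nonempty := A.nonempty

lemma NC_ext {A B : NonemptyCompacts X} (h : (A : Set X) = (B : Set X)) : A = B :=
  NonemptyCompacts.ext h

def NC_mk (s : Set X) (hc : IsCompact s) (hne : s.Nonempty) : NonemptyCompacts X :=
  ⟨⟨s, hc⟩, hne⟩

@[simp] lemma NC_mk_coe (s : Set X) (hc : IsCompact s) (hne : s.Nonempty) :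
    ((NC_mk s hc hne : NonemptyCompacts X) : Set X) = s := rfl

lemma NC_image_compact {Y : Type*} [MetricSpace Y] {f : X → Y} {K : NNReal}
    (hf : LipschitzWith K f) (A : NonemptyCompacts X) : IsCompact (f '' NC_coe A) :=
  (NC_compact A).image hf.continuous

lemma NC_dist_eq (A B : NonemptyCompacts X) :
    dist A B = hausdorffDist (A : Set X) (B : Set X) := rfl

end NChelpers

/-- The n-th symmetric product: nonempty subsets with at most n points,
as a subspace of the nonempty compact subsets with the Hausdorff metric. -/
abbrev SymProd (X : Type*) [MetricSpace X] (n : ℕ) :=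
  {A : NonemptyCompacts X // (A : Set X).Finite ∧ (A : Set X).ncard ≤ n}

/-- A Z-set in a metric space. -/
def IsZSet {Y : Type*} [MetricSpace Y] (A : Set Y) : Prop :=
  IsClosed A ∧ ∀ ε > 0, ∃ f : Y → Y, Continuous f ∧ (∀ y, f y ∉ A) ∧ ∀ y, dist y (f y) < ε

/-- A Z-map: a continuous map whose image is a Z-set. -/
def IsZMap {X Y : Type*} [MetricSpace X] [MetricSpace Y] (f : X → Y) : Prop :=
  Continuous f ∧ IsZSet (Set.range f)


theorem stmt18 [m : MetricSpace (ℕ → I)]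
    (hm : ∀ x y : ℕ → I, dist x y = ∑' j, (2:ℝ)⁻¹ ^ (j + 1) * |(x j : ℝ) - (y j : ℝ)|)
    (n : ℕ) (hn : 0 < n) (k : ℕ)
    (G : SymProd (ℕ → I) n × I → SymProd (ℕ → I) n)
    (hG : ∀ A t, ((G (A, t)).1 : Set (ℕ → I)) =
      (fun x j => if j < k then x j else σ t * x j) '' (A.1 : Set (ℕ → I))) :
    Continuous G ∧ (∀ A, G (A, 0) = A) ∧
    (∀ A, Metric.diam (Set.range fun t : I => G (A, t)) ≤ (2:ℝ)⁻¹ ^ k) ∧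
    Nonempty ({B : SymProd (ℕ → I) n // ∃ A, G (A, 1) = B} ≃ₜ SymProd (Fin k → I) n) := by
  have hpow0 : (0:ℝ) ≤ (2:ℝ)⁻¹ ^ k := by positivity
  have hpow1 : (2:ℝ)⁻¹ ^ k ≤ 1 := pow_le_one₀ (by norm_num) (by norm_num)
  have hG' : ∀ (A : SymProd (ℕ → I) n) (t : I), NC_coe (G (A, t)).1 =
      (fun x j => if j < k then x j else σ t * x j) '' NC_coe A.1 := hG
  -- a distance estimate for G
  have hGdist : ∀ (A B : SymProd (ℕ → I) n) (t s : I),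
      dist (G (A, t)) (G (B, s)) ≤ dist A B + (2:ℝ)⁻¹ ^ k * dist t s := by
    intro A B t s
    have hdd : dist (G (A, t)) (G (B, s)) =
        hausdorffDist (NC_coe (G (A, t)).1) (NC_coe (G (B, s)).1) := by
      rfl
    rw [hdd, hG', hG']
    have hle := hausdorff_aux (f := fun x j => if j < k then x j else σ t * x j)
      (g := fun x j => if j < k then x j else σ s * x j)
      (NC_compact A.1) (NC_compact B.1) (NC_nonempty A.1) (NC_nonempty B.1)
      (C := 1) (r := (2:ℝ)⁻¹ ^ k * dist t s) zero_le_one (by positivity)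
      (fun x y => by rw [one_mul]; exact dist_g_le hm k t s x y)
    have hAB : hausdorffDist (NC_coe A.1) (NC_coe B.1) = dist A B := by
      rfl
    simp only [NC_coe_eq] at hAB ⊢
    rw [hAB, one_mul] at hle
    exact hle
  refine ⟨?_, ?_, ?_, ?_⟩
  · -- continuity
    refine (LipschitzWith.of_dist_le_mul (K := 2) fun p q => ?_).continuous
    obtain ⟨A, t⟩ := p
    obtain ⟨B, s⟩ := q
    have h1 := hGdist A B t s
    have h2 : dist (A, t) (B, s) = max (dist A B) (dist t s) := rfl
    have h3 : dist A B ≤ max (dist A B) (dist t s) := le_max_left _ _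
    have h4 : dist t s ≤ max (dist A B) (dist t s) := le_max_right _ _
    have h5 : (2:ℝ)⁻¹ ^ k * dist t s ≤ dist t s :=
      mul_le_of_le_one_left dist_nonneg hpow1
    push_cast
    rw [h2]
    linarith
  · -- G (A, 0) = A
    intro A
    apply Subtype.ext
    apply NC_ext
    simp only [← NC_coe_eq]
    rw [hG']
    have hid : ∀ x ∈ NC_coe A.1,
        (fun j => if j < k then x j else σ 0 * x j) = x := by
      intro x _
      funext j
      split
      · rfl
      · rw [symm_zero, one_mul]
    rw [Set.image_congr hid, Set.image_id']
  · -- diameter estimate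
    intro A
    refine diam_le_of_forall_dist_le hpow0 ?_
    rintro _ ⟨t, rfl⟩ _ ⟨s, rfl⟩
    have h1 := hGdist A A t s
    have h2 : dist A A = 0 := dist_self A
    have h3 : dist t s ≤ 1 := by
      rw [Subtype.dist_eq, Real.dist_eq]; exact abs_I_sub_le t s
    nlinarith [(dist_nonneg : (0:ℝ) ≤ dist t s)]
  · -- the homeomorphism
    -- forward construction
    have hfix : ∀ x : Fin k → I,
        (fun j => if j < k then emb k x j else σ 1 * emb k x j) = emb k x := by
      intro x
      funext j
      by_cases hj : j < k
      · rw [if_pos hj]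
      · rw [if_neg hj, symm_one, zero_mul]
        simp only [emb, dif_neg hj]
    let toNE : SymProd (Fin k → I) n → SymProd (ℕ → I) n := fun A =>
      ⟨NC_mk (emb k '' NC_coe A.1)
          (NC_image_compact (lip_emb hm k) A.1) ((NC_nonempty A.1).image _),
       A.2.1.image _, (Set.ncard_image_le A.2.1).trans A.2.2⟩
    have htoNE : ∀ A, G (toNE A, 1) = toNE A := by
      intro A
      apply Subtype.ext
      apply NC_ext
      simp only [← NC_coe_eq]
      rw [hG']
      show (fun x j => if j < k then x j else σ 1 * x j) '' (emb k '' NC_coe A.1)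
        = emb k '' NC_coe A.1
      rw [Set.image_image]
      exact Set.image_congr fun x _ => hfix x
    let Φ : SymProd (Fin k → I) n → {B : SymProd (ℕ → I) n // ∃ A, G (A, 1) = B} :=
      fun A => ⟨toNE A, ⟨toNE A, htoNE A⟩⟩
    -- backward construction
    let Ψ : {B : SymProd (ℕ → I) n // ∃ A, G (A, 1) = B} → SymProd (Fin k → I) n :=
      fun B => ⟨NC_mk (proj k '' NC_coe B.1.1)
          (NC_image_compact (lip_proj hm k) B.1.1) ((NC_nonempty B.1.1).image _),
       B.1.2.1.image _, (Set.ncard_image_le B.1.2.1).trans B.1.2.2⟩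
    -- points of any B in range are fixed by emb ∘ proj
    have hBfix : ∀ (B : {B : SymProd (ℕ → I) n // ∃ A, G (A, 1) = B}),
        ∀ z ∈ NC_coe B.1.1, emb k (proj k z) = z := by
      rintro ⟨B, A, rfl⟩ z hz
      rw [hG'] at hz
      obtain ⟨w, _, rfl⟩ := hz
      funext j
      by_cases hj : j < k
      · simp only [emb, proj, dif_pos hj]
      · simp only [emb, dif_neg hj, if_neg hj, symm_one, zero_mul]
    have hpe : ∀ x : Fin k → I, proj k (emb k x) = x := by
      intro x
      funext i
      simp only [proj, emb, dif_pos i.2, Fin.eta]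
    -- left and right inverses
    have hΦΨ : ∀ B, Φ (Ψ B) = B := by
      intro B
      apply Subtype.ext
      apply Subtype.ext
      apply NC_ext
      show emb k '' (proj k '' NC_coe B.1.1) = NC_coe B.1.1
      rw [Set.image_image]
      rw [Set.image_congr (fun z hz => hBfix B z hz), Set.image_id']
    have hΨΦ : ∀ A, Ψ (Φ A) = A := by
      intro A
      apply Subtype.ext
      apply NC_ext
      show proj k '' (emb k '' NC_coe A.1) = NC_coe A.1
      rw [Set.image_image]
      rw [Set.image_congr (fun x _ => hpe x), Set.image_id']
    -- continuity of Ψ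
    have contΨ : Continuous Ψ := by
      refine (LipschitzWith.of_dist_le_mul (K := 2 ^ k) fun B B' => ?_).continuous
      have hd1 : dist (Ψ B) (Ψ B') =
          hausdorffDist (proj k '' NC_coe B.1.1) (proj k '' NC_coe B'.1.1) := by
        rfl
      have hd2 : dist B B' = hausdorffDist (NC_coe B.1.1) (NC_coe B'.1.1) := by
        rfl
      have hle := hausdorff_aux (f := proj k) (g := proj k)
        (NC_compact B.1.1) (NC_compact B'.1.1) (NC_nonempty B.1.1) (NC_nonempty B'.1.1)
        (C := 2 ^ k) (r := 0) (by positivity) le_rfl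
        (fun x y => by rw [add_zero]; exact dist_proj_le hm k x y)
      rw [add_zero] at hle
      rw [hd1, hd2]
      push_cast
      exact hle
    -- continuity of Φ
    have contΦ : Continuous Φ := by
      refine (LipschitzWith.of_dist_le_mul (K := 1) fun A A' => ?_).continuous
      have hd1 : dist (Φ A) (Φ A') =
          hausdorffDist (emb k '' NC_coe A.1) (emb k '' NC_coe A'.1) := by
        rfl
      have hd2 : dist A A' = hausdorffDist (NC_coe A.1) (NC_coe A'.1) := by
        rfl
      have hle := hausdorff_aux (f := emb k) (g := emb k)
        (NC_compact A.1) (NC_compact A'.1) (NC_nonempty A.1) (NC_nonempty A'.1)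
        (C := 1) (r := 0) zero_le_one le_rfl
        (fun x y => by rw [add_zero, one_mul]; exact dist_emb_le hm k x y)
      rw [add_zero, one_mul] at hle
      rw [hd1, hd2]
      push_cast
      rw [one_mul]
      exact hle
    exact ⟨⟨⟨Ψ, Φ, hΦΨ, hΨΦ⟩, contΨ, contΦ⟩⟩
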